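/- arXiv:1906.09096 — 4 statements merged into one kernel-verified Lean document; each statement's English description precedes it below -/
import Mathlib

section
/- Suppose the leader set is empty (ℒ = ∅, so every agent is a follower), the digraph 𝒟[t] is strongly (T,t0,2F+1)-robust with respect to the misbehaving set 𝒜, every normal agent i ∈ 𝒱 \ 𝒜 applies the SW-MSR algorithm with parameter F and weight bound α, and there exist an integer t1 ≥ t0 + T and a constant c ∈ ℝ such that every misbehaving agent j ∈ 𝒜 sends the same constant value x_j^i[t] = c to all of its out-neighbors i for all t ≥ t1 − T. Then lim_{t→∞} max over i ∈ 𝒱 \ 𝒜 of |x_i[t] − c| = 0. -/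
open Finset Filter

/-- The MSR removal predicate: `R` is a valid removal set for the filtering step of an
MSR-type algorithm, where an agent with current value `x` receives values `v j` from the
index set `I`, removes all indices with value strictly greater than `x` if there are at
most `F` of them and otherwise exactly `F` indices carrying the `F` largest such values,
and analogously for values strictly less than `x`. -/
def MSRRemoval {β : Type*} [DecidableEq β] (F : ℕ) (I : Finset β) (v : β → ℝ) (x : ℝ)
    (R : Finset β) : Prop :=
  R ⊆ I ∧ (∀ j ∈ R, v j ≠ x) ∧
  (if (I.filter fun j => x < v j).card ≤ F
    then (I.filter fun j => x < v j) ⊆ R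
    else (R.filter fun j => x < v j).card = F ∧
      ∀ j ∈ R.filter (fun j => x < v j), ∀ k ∈ (I.filter fun j => x < v j) \ R, v k ≤ v j) ∧
  (if (I.filter fun j => v j < x).card ≤ F
    then (I.filter fun j => v j < x) ⊆ R
    else (R.filter fun j => v j < x).card = F ∧
      ∀ j ∈ R.filter (fun j => v j < x), ∀ k ∈ (I.filter fun j => v j < x) \ R, v j ≤ v k)

/-- A leader-follower network of `n ≥ 2` agents with time-varying in-neighbor sets,
leader set `L`, misbehaving set `A`, states `x`, received values `xr` (`xr t i j` is the
value agent `i` receives from agent `j` at time `t`), MSR parameter `F`, weight lower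
bound `α ∈ (0,1)`, initial time `t0`, window length `T`, and reference signal `fr`. -/
structure LFNetwork where
  V : Type
  fin : Fintype V
  dec : DecidableEq V
  card_ge : 2 ≤ @Fintype.card V fin
  Vnbr : ℤ → V → Finset V
  nbr_not_self : ∀ (t : ℤ) (i : V), i ∉ Vnbr t i
  t0 : ℤ
  T : ℕ
  L : Finset V
  A : Finset V
  x : ℤ → V → ℝ
  xr : ℤ → V → V → ℝ
  recv_normal : ∀ (t : ℤ) (i j : V), j ∉ A → xr t i j = x t j
  F : ℕ
  α : ℝ
  α_pos : 0 < α
  α_lt_one : α < 1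
  fr : ℤ → ℝ

namespace LFNetwork

variable (N : LFNetwork)

instance : Fintype N.V := N.fin
instance : DecidableEq N.V := N.dec

/-- The follower set `S_f = 𝒱 \ ℒ`. -/
def Sf : Finset N.V := Finset.univ \ N.L

/-- The normal followers `S_f^𝒩 = S_f \ 𝒜`. -/
def SfN : Finset N.V := N.Sf \ N.A

/-- The normal leaders `ℒ^𝒩 = ℒ \ 𝒜`. -/
def LN : Finset N.V := N.L \ N.A

/-- The inclusive neighbor set `𝒥_i[t] = 𝒱_i[t] ∪ {i}`. -/
def Jset (t : ℤ) (i : N.V) : Finset N.V := insert i (N.Vnbr t i)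

/-- The truncated window length `T' = min(T, t - t0)`. -/
def Tw (t : ℤ) : ℤ := min (N.T : ℤ) (t - N.t0)

/-- The windowed inclusive neighbor set `𝒥_i^{T'}[t] = ⋃_{τ=0}^{T'} 𝒥_i[t-τ]`. -/
noncomputable def JT (t : ℤ) (i : N.V) : Finset N.V :=
  (Finset.Icc (t - N.Tw t) t).biUnion fun s => N.Jset s i

/-- `τ_{ij}[t]`: the largest time `s ∈ [t - T', t]` with `j ∈ 𝒥_i[s]`. -/
noncomputable def tauij (t : ℤ) (i j : N.V) : ℤ :=
  WithBot.unbotD t (((Finset.Icc (t - N.Tw t) t).filter fun s => j ∈ N.Jset s i).max)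

/-- The misbehaving set `𝒜` is `F`-local w.r.t. `t0`. -/
def FLocal : Prop :=
  ∀ i : N.V, i ∉ N.A → ∀ t : ℤ, N.t0 ≤ t → (N.A ∩ N.Vnbr t i).card ≤ N.F

/-- Every normal leader propagates the reference signal: `x_l[t] = f_r[t]`. -/
def LeaderDyn : Prop :=
  ∀ l ∈ N.LN, ∀ t : ℤ, N.t0 ≤ t → N.x t l = N.fr t

/-- Agent `i` applies the SW-MSR algorithm with parameter `F` and weight bound `α`. -/
def FollowsSWMSR (i : N.V) : Prop :=
  ∀ t : ℤ, N.t0 ≤ t →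
    ∃ (R : Finset N.V) (w : N.V → ℝ),
      i ∉ R ∧
      MSRRemoval N.F (N.JT t i) (fun j => N.xr (N.tauij t i j) i j) (N.x t i) R ∧
      (∀ j ∈ N.JT t i \ R, N.α ≤ w j) ∧
      (∑ j ∈ N.JT t i \ R, w j) = 1 ∧
      N.x (t + 1) i = ∑ j ∈ N.JT t i \ R, w j * N.xr (N.tauij t i j) i j

/-- `M̄[t]`: the maximum of `x_i[t-τ]` over normal followers and normal leaders `i`
and `τ ∈ [0, T']`. -/
noncomputable def Mbar (t : ℤ) : ℝ :=
  sSup {y : ℝ | ∃ i ∈ N.SfN ∪ N.LN, ∃ τ : ℤ, 0 ≤ τ ∧ τ ≤ N.Tw t ∧ y = N.x (t - τ) i}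

/-- `m̄[t]`: the minimum of `x_i[t-τ]` over normal followers and normal leaders `i`
and `τ ∈ [0, T']`. -/
noncomputable def mbar (t : ℤ) : ℝ :=
  sInf {y : ℝ | ∃ i ∈ N.SfN ∪ N.LN, ∃ τ : ℤ, 0 ≤ τ ∧ τ ≤ N.Tw t ∧ y = N.x (t - τ) i}

/-- `V[t] = M̄[t] - m̄[t]`. -/
noncomputable def Vfun (t : ℤ) : ℝ := N.Mbar t - N.mbar t

/-- The time-varying digraph `𝒟[t]` is strongly `(T, t0, r)`-robust w.r.t. `S`:
for every `t ≥ t0 + T`, every nonempty `C ⊆ 𝒱 \ S` is `r`-reachable in the union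
digraph `𝒟^T[t]`. -/
def StronglyRobust (r : ℕ) (S : Finset N.V) : Prop :=
  ∀ t : ℤ, N.t0 + N.T ≤ t →
    ∀ C : Finset N.V, C.Nonempty → C ⊆ Finset.univ \ S →
      ∃ i ∈ C, r ≤ (((Finset.Icc (t - N.T) t).biUnion fun s => N.Vnbr s i) \ C).card

end LFNetwork

section AuxLemmas

namespace LFNetwork

variable (N : LFNetwork)

lemma T_nonneg : (0 : ℤ) ≤ (N.T : ℤ) := Int.natCast_nonneg _

lemma Tw_eq {u : ℤ} (hu : N.t0 + N.T ≤ u) : N.Tw u = (N.T : ℤ) :=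
  min_eq_left (by omega)

lemma mem_Jset_self (s : ℤ) (i : N.V) : i ∈ N.Jset s i := Finset.mem_insert_self _ _

lemma mem_JT_self {u : ℤ} (hu : N.t0 + N.T ≤ u) (i : N.V) : i ∈ N.JT u i := by
  refine Finset.mem_biUnion.2 ⟨u, ?_, N.mem_Jset_self u i⟩
  rw [Finset.mem_Icc, N.Tw_eq hu]
  have := N.T_nonneg
  omega

lemma tauij_mem {u : ℤ} {i j : N.V} (h : j ∈ N.JT u i) :
    N.tauij u i j ∈ Finset.Icc (u - N.Tw u) u ∧ j ∈ N.Jset (N.tauij u i j) i := by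
  rw [JT, Finset.mem_biUnion] at h
  obtain ⟨s, hs, hjs⟩ := h
  have hne : ((Finset.Icc (u - N.Tw u) u).filter fun s => j ∈ N.Jset s i).Nonempty :=
    ⟨s, Finset.mem_filter.2 ⟨hs, hjs⟩⟩
  obtain ⟨m, hm⟩ := Finset.max_of_nonempty hne
  have hmem := Finset.mem_of_max hm
  rw [tauij, hm]
  exact ⟨(Finset.mem_filter.1 hmem).1, (Finset.mem_filter.1 hmem).2⟩

lemma tauij_self {u : ℤ} (hu : N.t0 + N.T ≤ u) (i : N.V) : N.tauij u i i = u := by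
  have hmem : u ∈ (Finset.Icc (u - N.Tw u) u).filter fun s => i ∈ N.Jset s i := by
    refine Finset.mem_filter.2 ⟨?_, N.mem_Jset_self u i⟩
    rw [Finset.mem_Icc, N.Tw_eq hu]
    have := N.T_nonneg
    omega
  have hmax : ((Finset.Icc (u - N.Tw u) u).filter fun s => i ∈ N.Jset s i).max
      = (u : WithBot ℤ) := by
    refine le_antisymm (Finset.max_le fun b hb => ?_) (Finset.le_max hmem)
    exact_mod_cast (Finset.mem_Icc.1 (Finset.mem_filter.1 hb).1).2
  rw [tauij, hmax]
  rfl

end LFNetwork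

lemma MSRRemoval_card_le {β : Type*} [DecidableEq β] {F : ℕ} {I : Finset β} {v : β → ℝ}
    {x : ℝ} {R : Finset β} (h : MSRRemoval F I v x R) : R.card ≤ 2 * F := by
  obtain ⟨hRI, hne, hgt, hlt⟩ := h
  have h1 : (R.filter fun j => x < v j).card ≤ F := by
    by_cases hc : (I.filter fun j => x < v j).card ≤ F
    · exact le_trans (Finset.card_le_card (Finset.filter_subset_filter _ hRI)) hc
    · rw [if_neg hc] at hgt; exact le_of_eq hgt.1
  have h2 : (R.filter fun j => v j < x).card ≤ F := by
    by_cases hc : (I.filter fun j => v j < x).card ≤ F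
    · exact le_trans (Finset.card_le_card (Finset.filter_subset_filter _ hRI)) hc
    · rw [if_neg hc] at hlt; exact le_of_eq hlt.1
  have hcover : R ⊆ (R.filter fun j => x < v j) ∪ (R.filter fun j => v j < x) := by
    intro j hj
    rcases lt_or_gt_of_ne (hne j hj) with h | h
    · exact Finset.mem_union_right _ (Finset.mem_filter.2 ⟨hj, h⟩)
    · exact Finset.mem_union_left _ (Finset.mem_filter.2 ⟨hj, h⟩)
  calc R.card ≤ ((R.filter fun j => x < v j) ∪ (R.filter fun j => v j < x)).card :=
        Finset.card_le_card hcover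
    _ ≤ (R.filter fun j => x < v j).card + (R.filter fun j => v j < x).card :=
        Finset.card_union_le _ _
    _ ≤ 2 * F := by omega

lemma sum_convex_le {β : Type*} [DecidableEq β] {S : Finset β} {w v : β → ℝ} {a M B : ℝ}
    (ha : 0 < a) (hw : ∀ j ∈ S, a ≤ w j) (hsum : ∑ j ∈ S, w j = 1)
    (hv : ∀ j ∈ S, v j ≤ M) {j0 : β} (hj0 : j0 ∈ S) (hB : v j0 ≤ B) (hBM : B ≤ M) :
    ∑ j ∈ S, w j * v j ≤ M - a * (M - B) := by
  have hj0w : a ≤ w j0 := hw _ hj0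
  have h1 : ∑ j ∈ S.erase j0, w j = 1 - w j0 := by
    have h := Finset.add_sum_erase S w hj0
    rw [hsum] at h
    linarith
  have h2 : ∑ j ∈ S.erase j0, w j * v j ≤ (1 - w j0) * M := by
    rw [← h1, Finset.sum_mul]
    refine Finset.sum_le_sum fun j hj => ?_
    have hwj := hw j (Finset.mem_of_mem_erase hj)
    have hvj := hv j (Finset.mem_of_mem_erase hj)
    nlinarith
  rw [← Finset.add_sum_erase S _ hj0]
  have h3 : w j0 * v j0 ≤ w j0 * B :=
    mul_le_mul_of_nonneg_left hB (le_trans ha.le hj0w)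
  nlinarith [mul_le_mul_of_nonneg_right hj0w (sub_nonneg.2 hBM)]

end AuxLemmas

section ReflectLemmas

lemma MSRRemoval_reflect {β : Type*} [DecidableEq β] {F : ℕ} {I : Finset β} {v : β → ℝ}
    {x : ℝ} {R : Finset β} (c : ℝ) (h : MSRRemoval F I v x R) :
    MSRRemoval F I (fun j => 2 * c - v j) (2 * c - x) R := by
  obtain ⟨h1, h2, hgt, hlt⟩ := h
  have e1 : (fun j : β => 2 * c - x < 2 * c - v j) = fun j => v j < x := by
    funext j; simp only [eq_iff_iff]; constructor <;> (intro; linarith)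
  have e2 : (fun j : β => 2 * c - v j < 2 * c - x) = fun j => x < v j := by
    funext j; simp only [eq_iff_iff]; constructor <;> (intro; linarith)
  refine ⟨h1, fun j hj hc => h2 j hj (by simp only at hc; linarith), ?_, ?_⟩
  · simp only [e1]
    by_cases hc : (I.filter fun j => v j < x).card ≤ F
    · rw [if_pos hc]; rw [if_pos hc] at hlt; exact hlt
    · rw [if_neg hc]; rw [if_neg hc] at hlt
      exact ⟨hlt.1, fun j hj k hk => by have := hlt.2 j hj k hk; linarith⟩
  · simp only [e2]
    by_cases hc : (I.filter fun j => x < v j).card ≤ F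
    · rw [if_pos hc]; rw [if_pos hc] at hgt; exact hgt
    · rw [if_neg hc]; rw [if_neg hc] at hgt
      exact ⟨hgt.1, fun j hj k hk => by have := hgt.2 j hj k hk; linarith⟩

namespace LFNetwork

variable (N : LFNetwork)

/-- Reflection of a network around the value `c`. -/
def reflect (c : ℝ) : LFNetwork :=
  { N with
    x := fun t i => 2 * c - N.x t i
    xr := fun t i j => 2 * c - N.xr t i j
    recv_normal := fun t i j h => by simp [N.recv_normal t i j h]
    fr := fun t => 2 * c - N.fr t }

lemma reflect_V (c : ℝ) : (N.reflect c).V = N.V := rfl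
lemma reflect_JT (c : ℝ) : (N.reflect c).JT = N.JT := rfl
lemma reflect_tauij (c : ℝ) : (N.reflect c).tauij = N.tauij := rfl

lemma reflect_follows (c : ℝ) {i : N.V} (h : N.FollowsSWMSR i) :
    (N.reflect c).FollowsSWMSR i := by
  intro t ht
  obtain ⟨R, w, hiR, hMSR, hw, hsum, hupd⟩ := h t ht
  refine ⟨R, w, hiR, MSRRemoval_reflect c hMSR, hw, hsum, ?_⟩
  show 2 * c - N.x (t + 1) i
      = ∑ j ∈ N.JT t i \ R, w j * (2 * c - N.xr (N.tauij t i j) i j)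
  have : ∑ j ∈ N.JT t i \ R, w j * (2 * c - N.xr (N.tauij t i j) i j)
      = (∑ j ∈ N.JT t i \ R, w j) * (2 * c)
        - ∑ j ∈ N.JT t i \ R, w j * N.xr (N.tauij t i j) i j := by
    rw [Finset.sum_mul, ← Finset.sum_sub_distrib]
    exact Finset.sum_congr rfl fun j _ => by ring
  rw [this, hsum, ← hupd]
  ring

end LFNetwork

end ReflectLemmas

section Machinery

namespace LFNetwork

variable (N : LFNetwork)

lemma vals_le {t1 : ℤ} (ht1 : N.t0 + N.T ≤ t1) {c : ℝ}
    (hsend : ∀ t : ℤ, t1 - N.T ≤ t → ∀ j ∈ N.A, ∀ i : N.V, j ∈ N.Vnbr t i → N.xr t i j = c)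
    {M : ℝ} {u : ℤ} (hu : t1 ≤ u) (hcM : c ≤ M)
    (hM : ∀ j, j ∉ N.A → ∀ s, u - N.T ≤ s → s ≤ u → N.x s j ≤ M)
    {i : N.V} (hi : i ∉ N.A) {j : N.V} (hj : j ∈ N.JT u i) :
    N.xr (N.tauij u i j) i j ≤ M := by
  obtain ⟨hτ, hjJ⟩ := N.tauij_mem hj
  rw [Finset.mem_Icc, N.Tw_eq (by omega)] at hτ
  by_cases hjA : j ∈ N.A
  · have hji : j ≠ i := fun h => hi (h ▸ hjA)
    have hjV : j ∈ N.Vnbr (N.tauij u i j) i := by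
      rcases Finset.mem_insert.1 hjJ with h | h
      · exact absurd h hji
      · exact h
    rw [hsend _ (by omega) j hjA i hjV]
    exact hcM
  · rw [N.recv_normal _ _ _ hjA]
    exact hM j hjA _ (by omega) (by omega)

lemma step_bound (hfollow : ∀ i : N.V, i ∉ N.A → N.FollowsSWMSR i)
    {t1 : ℤ} (ht1 : N.t0 + N.T ≤ t1) {c : ℝ}
    (hsend : ∀ t : ℤ, t1 - N.T ≤ t → ∀ j ∈ N.A, ∀ i : N.V, j ∈ N.Vnbr t i → N.xr t i j = c)
    {M B : ℝ} {u : ℤ} (hu : t1 ≤ u) (hcM : c ≤ M) (hBM : B ≤ M)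
    (hM : ∀ j, j ∉ N.A → ∀ s, u - N.T ≤ s → s ≤ u → N.x s j ≤ M)
    {i : N.V} (hi : i ∉ N.A)
    (hwit : ∀ R : Finset N.V, R.card ≤ 2 * N.F → i ∉ R →
      ∃ j0, j0 ∈ N.JT u i ∧ j0 ∉ R ∧ N.xr (N.tauij u i j0) i j0 ≤ B) :
    N.x (u + 1) i ≤ M - N.α * (M - B) := by
  have hT := N.T_nonneg
  obtain ⟨R, w, hiR, hMSR, hw, hsum, hupd⟩ := hfollow i hi u (by omega)
  obtain ⟨j0, hj0J, hj0R, hj0v⟩ := hwit R (MSRRemoval_card_le hMSR) hiR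
  rw [hupd]
  refine sum_convex_le N.α_pos hw hsum (fun j hjm => ?_)
    (Finset.mem_sdiff.2 ⟨hj0J, hj0R⟩) hj0v hBM
  exact N.vals_le ht1 hsend hu hcM hM hi (Finset.mem_sdiff.1 hjm).1

lemma step_le (hfollow : ∀ i : N.V, i ∉ N.A → N.FollowsSWMSR i)
    {t1 : ℤ} (ht1 : N.t0 + N.T ≤ t1) {c : ℝ}
    (hsend : ∀ t : ℤ, t1 - N.T ≤ t → ∀ j ∈ N.A, ∀ i : N.V, j ∈ N.Vnbr t i → N.xr t i j = c)
    {M : ℝ} {u : ℤ} (hu : t1 ≤ u) (hcM : c ≤ M)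
    (hM : ∀ j, j ∉ N.A → ∀ s, u - N.T ≤ s → s ≤ u → N.x s j ≤ M)
    {i : N.V} (hi : i ∉ N.A) {ε : ℝ} (hε : 0 ≤ ε) (hxu : N.x u i ≤ M - ε) :
    N.x (u + 1) i ≤ M - N.α * ε := by
  have hT := N.T_nonneg
  have hwit : ∀ R : Finset N.V, R.card ≤ 2 * N.F → i ∉ R →
      ∃ j0, j0 ∈ N.JT u i ∧ j0 ∉ R ∧ N.xr (N.tauij u i j0) i j0 ≤ M - ε := by
    intro R _ hiR
    refine ⟨i, N.mem_JT_self (by omega) i, hiR, ?_⟩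
    rw [N.tauij_self (by omega), N.recv_normal _ _ _ hi]
    exact hxu
  have h := N.step_bound hfollow ht1 hsend hu hcM (B := M - ε) (by linarith) hM hi hwit
  have e : M - N.α * (M - (M - ε)) = M - N.α * ε := by ring
  linarith [e ▸ h]

lemma safety (hfollow : ∀ i : N.V, i ∉ N.A → N.FollowsSWMSR i)
    {t1 : ℤ} (ht1 : N.t0 + N.T ≤ t1) {c : ℝ}
    (hsend : ∀ t : ℤ, t1 - N.T ≤ t → ∀ j ∈ N.A, ∀ i : N.V, j ∈ N.Vnbr t i → N.xr t i j = c)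
    {M : ℝ} {t : ℤ} (htt : t1 ≤ t) (hcM : c ≤ M)
    (hwin : ∀ j, j ∉ N.A → ∀ s, t - N.T ≤ s → s ≤ t → N.x s j ≤ M) :
    ∀ s, t - N.T ≤ s → ∀ j, j ∉ N.A → N.x s j ≤ M := by
  have hT := N.T_nonneg
  have key : ∀ u, t ≤ u → ∀ s, t - N.T ≤ s → s ≤ u → ∀ j, j ∉ N.A → N.x s j ≤ M := by
    intro u hu
    refine Int.le_induction (motive := fun u _ => ∀ s, t - N.T ≤ s → s ≤ u → ∀ j, j ∉ N.A → N.x s j ≤ M) ?_ ?_ u hu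
    · intro s h1 h2 j hj; exact hwin j hj s h1 h2
    · intro u hu IH
      intro s h1 h2 j hj
      rcases lt_or_eq_of_le h2 with h | h
      · exact IH s h1 (by omega) j hj
      · subst h
        have hx : N.x u j ≤ M - 0 := by
          have := IH u (by omega) le_rfl j hj; linarith
        have hstep := N.step_le hfollow ht1 hsend (by omega) hcM
          (fun j' hj' s' hs1 hs2 => IH s' (by omega) hs2 j' hj') hj le_rfl hx
        calc N.x (u + 1) j ≤ M - N.α * 0 := hstep
          _ = M := by ring
  intro s hs j hj
  by_cases hst : s ≤ t
  · exact hwin j hj s hs hst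
  · exact key s (by omega) s hs le_rfl j hj

lemma decay (hfollow : ∀ i : N.V, i ∉ N.A → N.FollowsSWMSR i)
    {t1 : ℤ} (ht1 : N.t0 + N.T ≤ t1) {c : ℝ}
    (hsend : ∀ t : ℤ, t1 - N.T ≤ t → ∀ j ∈ N.A, ∀ i : N.V, j ∈ N.Vnbr t i → N.xr t i j = c)
    {M : ℝ} {t : ℤ} (htt : t1 ≤ t) (hcM : c ≤ M)
    (hsafe : ∀ s, t - N.T ≤ s → ∀ j, j ∉ N.A → N.x s j ≤ M)
    {u : ℤ} (hu : t ≤ u) {i : N.V} (hi : i ∉ N.A) {ε : ℝ} (hε : 0 ≤ ε)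
    (hxu : N.x u i ≤ M - ε) :
    ∀ d : ℕ, N.x (u + d) i ≤ M - N.α ^ d * ε := by
  have hT := N.T_nonneg
  intro d
  induction d with
  | zero => simpa using hxu
  | succ d IH =>
    have hstep := N.step_le hfollow ht1 hsend (u := u + d) (by omega) hcM
      (fun j hj s hs1 hs2 => hsafe s (by omega) j hj) hi
      (mul_nonneg (pow_nonneg N.α_pos.le d) hε) IH
    have e2 : ((d + 1 : ℕ) : ℤ) = (d : ℤ) + 1 := by push_cast; ring
    have e : u + ((d : ℤ) + 1) = (u + d) + 1 := by ring
    rw [e2, e]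
    calc N.x (u + d + 1) i ≤ M - N.α * (N.α ^ d * ε) := hstep
      _ = M - N.α ^ (d + 1) * ε := by ring

end LFNetwork

end Machinery

section Machinery2

namespace LFNetwork

variable (N : LFNetwork)

lemma block (hfollow : ∀ i : N.V, i ∉ N.A → N.FollowsSWMSR i)
    {t1 : ℤ} (ht1 : N.t0 + N.T ≤ t1) {c : ℝ}
    (hsend : ∀ t : ℤ, t1 - N.T ≤ t → ∀ j ∈ N.A, ∀ i : N.V, j ∈ N.Vnbr t i → N.xr t i j = c)
    (hrob : N.StronglyRobust (2 * N.F + 1) N.A)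
    {M : ℝ} {t : ℤ} (htt : t1 ≤ t) (hcM : c ≤ M)
    (hsafe : ∀ s, t - N.T ≤ s → ∀ j, j ∉ N.A → N.x s j ≤ M)
    {ε : ℝ} (hε : 0 ≤ ε) (hεMc : ε ≤ M - c)
    {s0 : ℤ} (hs0 : t ≤ s0) {Y : Finset N.V} (hY : Y ⊆ Finset.univ \ N.A)
    (hout : ∀ j, j ∉ N.A → j ∉ Y → ∀ s, s0 - N.T ≤ s → s ≤ s0 → N.x s j ≤ M - ε) :
    ∃ Y' : Finset N.V, Y' ⊆ Finset.univ \ N.A ∧ Y'.card ≤ Y.card - 1 ∧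
      ∀ j, j ∉ N.A → j ∉ Y' → ∀ s, s0 + 1 ≤ s → s ≤ s0 + N.T + 1 →
        N.x s j ≤ M - N.α ^ (N.T + 1) * ε := by
  have hT := N.T_nonneg
  have hα0 := N.α_pos.le
  have hα1 := N.α_lt_one.le
  have hpersist : ∀ j, j ∉ N.A → (∀ s, s0 - N.T ≤ s → s ≤ s0 → N.x s j ≤ M - ε) →
      ∀ s, s0 + 1 ≤ s → s ≤ s0 + N.T + 1 → N.x s j ≤ M - N.α ^ (N.T + 1) * ε := by
    intro j hj hjout s hs1 hs2
    have hd := N.decay hfollow ht1 hsend htt hcM hsafe hs0 hj hε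
      (hjout s0 (by omega) le_rfl) ((s - s0).toNat)
    have he : s0 + ((s - s0).toNat : ℤ) = s := by
      rw [Int.toNat_of_nonneg (by omega)]; ring
    rw [he] at hd
    have hpow : N.α ^ (N.T + 1) ≤ N.α ^ ((s - s0).toNat) :=
      pow_le_pow_of_le_one hα0 hα1 (by omega)
    have := mul_le_mul_of_nonneg_right hpow hε
    linarith
  rcases Finset.eq_empty_or_nonempty Y with hYe | hYne
  · refine ⟨∅, by simp, by simp, ?_⟩
    intro j hj _ s hs1 hs2
    exact hpersist j hj (fun s' h1 h2 => hout j hj (by simp [hYe]) s' h1 h2) s hs1 hs2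
  · obtain ⟨i0, hi0Y, hcardZ⟩ := hrob s0 (by omega) Y hYne hY
    have hi0A : i0 ∉ N.A := by
      have h := hY hi0Y; rw [Finset.mem_sdiff] at h; exact h.2
    set Z : Finset N.V := ((Finset.Icc (s0 - N.T) s0).biUnion fun s => N.Vnbr s i0) \ Y with hZ
    have hZJT : ∀ j ∈ Z, j ∈ N.JT s0 i0 := by
      intro j hj
      rw [hZ, Finset.mem_sdiff, Finset.mem_biUnion] at hj
      obtain ⟨⟨s, hs, hjs⟩, _⟩ := hj
      rw [JT, N.Tw_eq (by omega)]
      exact Finset.mem_biUnion.2 ⟨s, hs, Finset.mem_insert_of_mem hjs⟩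
    have hwit : ∀ R : Finset N.V, R.card ≤ 2 * N.F → i0 ∉ R →
        ∃ j0, j0 ∈ N.JT s0 i0 ∧ j0 ∉ R ∧ N.xr (N.tauij s0 i0 j0) i0 j0 ≤ M - ε := by
      intro R hR _
      have hnots : ¬ Z ⊆ R := by
        intro hsub
        have := Finset.card_le_card hsub
        omega
      obtain ⟨j0, hj0Z, hj0R⟩ := Finset.not_subset.1 hnots
      refine ⟨j0, hZJT j0 hj0Z, hj0R, ?_⟩
      obtain ⟨hτ, hjJ⟩ := N.tauij_mem (hZJT j0 hj0Z)
      rw [Finset.mem_Icc, N.Tw_eq (by omega)] at hτ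
      have hj0Y : j0 ∉ Y := (Finset.mem_sdiff.1 hj0Z).2
      by_cases hjA : j0 ∈ N.A
      · have hji : j0 ≠ i0 := fun h => hi0A (h ▸ hjA)
        have hjV : j0 ∈ N.Vnbr (N.tauij s0 i0 j0) i0 := by
          rcases Finset.mem_insert.1 hjJ with h | h
          · exact absurd h hji
          · exact h
        rw [hsend _ (by omega) j0 hjA i0 hjV]
        linarith
      · rw [N.recv_normal _ _ _ hjA]
        exact hout j0 hjA hj0Y _ (by omega) (by omega)
    have hstep1 : N.x (s0 + 1) i0 ≤ M - N.α * ε := by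
      have hb := N.step_bound hfollow ht1 hsend (u := s0) (by omega) hcM (B := M - ε)
        (by linarith) (fun j hj s hs1 hs2 => hsafe s (by omega) j hj) hi0A hwit
      have e : M - N.α * (M - (M - ε)) = M - N.α * ε := by ring
      linarith [e ▸ hb]
    refine ⟨Y.erase i0, le_trans (Finset.erase_subset _ _) hY,
      le_of_eq (Finset.card_erase_of_mem hi0Y), ?_⟩
    intro j hj hjY' s hs1 hs2
    by_cases hji0 : j = i0
    · subst hji0
      have hd := N.decay hfollow ht1 hsend htt hcM hsafe (u := s0 + 1) (by omega) hj
        (mul_nonneg hα0 hε) hstep1 ((s - (s0 + 1)).toNat)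
      have he : s0 + 1 + ((s - (s0 + 1)).toNat : ℤ) = s := by
        rw [Int.toNat_of_nonneg (by omega)]; ring
      rw [he] at hd
      have e : N.α ^ ((s - (s0 + 1)).toNat) * (N.α * ε)
          = N.α ^ ((s - (s0 + 1)).toNat + 1) * ε := by ring
      rw [e] at hd
      have hpow : N.α ^ (N.T + 1) ≤ N.α ^ ((s - (s0 + 1)).toNat + 1) :=
        pow_le_pow_of_le_one hα0 hα1 (by omega)
      have := mul_le_mul_of_nonneg_right hpow hε
      linarith
    · have hjY : j ∉ Y := fun h => hjY' (Finset.mem_erase.2 ⟨hji0, h⟩)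
      exact hpersist j hj (fun s' h1 h2 => hout j hj hjY s' h1 h2) s hs1 hs2

lemma blocks (hfollow : ∀ i : N.V, i ∉ N.A → N.FollowsSWMSR i)
    {t1 : ℤ} (ht1 : N.t0 + N.T ≤ t1) {c : ℝ}
    (hsend : ∀ t : ℤ, t1 - N.T ≤ t → ∀ j ∈ N.A, ∀ i : N.V, j ∈ N.Vnbr t i → N.xr t i j = c)
    (hrob : N.StronglyRobust (2 * N.F + 1) N.A)
    {M : ℝ} {t : ℤ} (htt : t1 ≤ t) (hcM : c ≤ M)
    (hwin : ∀ j, j ∉ N.A → ∀ s, t - N.T ≤ s → s ≤ t → N.x s j ≤ M) :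
    ∀ k : ℕ, ∃ Y : Finset N.V, Y ⊆ Finset.univ \ N.A ∧
      Y.card ≤ (Finset.univ \ N.A : Finset N.V).card - k ∧
      ∀ j, j ∉ N.A → j ∉ Y → ∀ s, t + ((k * (N.T + 1) : ℕ) : ℤ) - N.T ≤ s →
        s ≤ t + ((k * (N.T + 1) : ℕ) : ℤ) →
        N.x s j ≤ M - N.α ^ (k * (N.T + 1)) * (M - c) := by
  have hsafe := N.safety hfollow ht1 hsend htt hcM hwin
  have hT := N.T_nonneg
  intro k
  induction k with
  | zero =>
    refine ⟨Finset.univ \ N.A, le_refl _, by simp, ?_⟩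
    intro j hj hjY
    exact absurd (Finset.mem_sdiff.2 ⟨Finset.mem_univ j, hj⟩) hjY
  | succ k IH =>
    obtain ⟨Y, hYsub, hYcard, hYout⟩ := IH
    have hε : 0 ≤ N.α ^ (k * (N.T + 1)) * (M - c) :=
      mul_nonneg (pow_nonneg N.α_pos.le _) (by linarith)
    have hεMc : N.α ^ (k * (N.T + 1)) * (M - c) ≤ M - c := by
      have h1 : N.α ^ (k * (N.T + 1)) ≤ 1 := pow_le_one₀ N.α_pos.le N.α_lt_one.le
      nlinarith
    obtain ⟨Y', hY'sub, hY'card, hY'out⟩ := N.block hfollow ht1 hsend hrob htt hcM hsafe hε hεMc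
      (s0 := t + ((k * (N.T + 1) : ℕ) : ℤ)) (by omega) hYsub
      (fun j hj hjY s h1 h2 => hYout j hj hjY s h1 h2)
    refine ⟨Y', hY'sub, by omega, ?_⟩
    intro j hj hjY' s h1 h2
    have hcast : (((k + 1) * (N.T + 1) : ℕ) : ℤ) = ((k * (N.T + 1) : ℕ) : ℤ) + N.T + 1 := by
      push_cast; ring
    have hb := hY'out j hj hjY' s (by omega) (by omega)
    have he : N.α ^ (N.T + 1) * (N.α ^ (k * (N.T + 1)) * (M - c))
        = N.α ^ ((k + 1) * (N.T + 1)) * (M - c) := by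
      rw [← mul_assoc, ← pow_add]
      have e2 : N.T + 1 + k * (N.T + 1) = (k + 1) * (N.T + 1) := by ring
      rw [e2]
    linarith [he ▸ hb]

lemma converge_upper (hfollow : ∀ i : N.V, i ∉ N.A → N.FollowsSWMSR i)
    {t1 : ℤ} (ht1 : N.t0 + N.T ≤ t1) {c : ℝ}
    (hsend : ∀ t : ℤ, t1 - N.T ≤ t → ∀ j ∈ N.A, ∀ i : N.V, j ∈ N.Vnbr t i → N.xr t i j = c)
    (hrob : N.StronglyRobust (2 * N.F + 1) N.A)
    {m : ℕ} (hm : (Finset.univ \ N.A : Finset N.V).card ≤ m)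
    {K : ℝ} (hK : 0 ≤ K)
    (hwin0 : ∀ j, j ∉ N.A → ∀ s, t1 - N.T ≤ s → s ≤ t1 → N.x s j ≤ c + K) :
    ∀ k : ℕ, ∀ j, j ∉ N.A → ∀ s,
      t1 + ((k * (m * (N.T + 1)) : ℕ) : ℤ) - N.T ≤ s →
      N.x s j ≤ c + (1 - N.α ^ (m * (N.T + 1))) ^ k * K := by
  have hT := N.T_nonneg
  set q := N.α ^ (m * (N.T + 1)) with hq
  have hq0 : 0 ≤ q := pow_nonneg N.α_pos.le _
  have hq1 : q ≤ 1 := pow_le_one₀ N.α_pos.le N.α_lt_one.le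
  have hwin : ∀ k : ℕ, ∀ j, j ∉ N.A → ∀ s,
      t1 + ((k * (m * (N.T + 1)) : ℕ) : ℤ) - N.T ≤ s →
      s ≤ t1 + ((k * (m * (N.T + 1)) : ℕ) : ℤ) →
      N.x s j ≤ c + (1 - q) ^ k * K := by
    intro k
    induction k with
    | zero =>
      intro j hj s h1 h2
      have hc0 : ((0 * (m * (N.T + 1)) : ℕ) : ℤ) = 0 := by simp
      rw [hc0] at h1 h2
      have := hwin0 j hj s (by omega) (by omega)
      simpa using this
    | succ k IH =>
      have hcM : c ≤ c + (1 - q) ^ k * K := by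
        have := mul_nonneg (pow_nonneg (by linarith : (0:ℝ) ≤ 1 - q) k) hK
        linarith
      obtain ⟨Y, hYsub, hYcard, hYout⟩ := N.blocks hfollow ht1 hsend hrob
        (t := t1 + ((k * (m * (N.T + 1)) : ℕ) : ℤ)) (by omega) hcM IH m
      have hY0 : Y = ∅ := Finset.card_eq_zero.1 (by omega)
      intro j hj s h1 h2
      have hcast : (((k + 1) * (m * (N.T + 1)) : ℕ) : ℤ)
          = ((k * (m * (N.T + 1)) : ℕ) : ℤ) + ((m * (N.T + 1) : ℕ) : ℤ) := by
        push_cast; ring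
      have hb := hYout j hj (by simp [hY0]) s (by omega) (by omega)
      rw [← hq] at hb
      have he : (c + (1 - q) ^ k * K) - q * ((c + (1 - q) ^ k * K) - c)
          = c + (1 - q) ^ (k + 1) * K := by ring
      linarith [he ▸ hb]
  intro k j hj s hs
  have hcM : c ≤ c + (1 - q) ^ k * K := by
    have := mul_nonneg (pow_nonneg (by linarith : (0:ℝ) ≤ 1 - q) k) hK
    linarith
  exact N.safety hfollow ht1 hsend (t := t1 + ((k * (m * (N.T + 1)) : ℕ) : ℤ))
    (by omega) hcM (hwin k) s hs j hj

end LFNetwork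

end Machinery2


/-- in a leaderless network (`ℒ = ∅`) which is strongly
`(T,t0,2F+1)`-robust w.r.t. the misbehaving set `𝒜`, if every normal agent applies the
SW-MSR algorithm and every misbehaving agent sends the same constant value `c` to all of
its out-neighbors for all `t ≥ t1 - T` (where `t1 ≥ t0 + T`), then
`lim_{t→∞} max_{i ∈ 𝒱 \ 𝒜} |x_i[t] - c| = 0`. -/
theorem swmsr_adversarial_takeover (N : LFNetwork)
    (hL : N.L = ∅)
    (hrob : N.StronglyRobust (2 * N.F + 1) N.A)
    (hfollow : ∀ i : N.V, i ∉ N.A → N.FollowsSWMSR i)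
    (t1 : ℤ) (ht1 : N.t0 + N.T ≤ t1) (c : ℝ)
    (hsend : ∀ t : ℤ, t1 - N.T ≤ t → ∀ j ∈ N.A, ∀ i : N.V, j ∈ N.Vnbr t i →
      N.xr t i j = c) :
    Filter.Tendsto
      (fun t : ℤ => sSup {y : ℝ | ∃ i : N.V, i ∉ N.A ∧ y = |N.x t i - c|})
      Filter.atTop (nhds 0) := by
  classical
  by_cases hA : ∃ i : N.V, i ∉ N.A
  · obtain ⟨i0, hi0⟩ := hA
    have hT := N.T_nonneg
    set n := (Finset.univ \ N.A : Finset N.V).card with hn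
    set q := N.α ^ (n * (N.T + 1)) with hq
    have hq0 : 0 < q := pow_pos N.α_pos _
    have hq1 : q ≤ 1 := pow_le_one₀ N.α_pos.le N.α_lt_one.le
    have hi0m : i0 ∈ Finset.univ \ N.A := Finset.mem_sdiff.2 ⟨Finset.mem_univ _, hi0⟩
    have hDne : ((Finset.univ \ N.A) ×ˢ Finset.Icc (t1 - (N.T : ℤ)) t1).Nonempty :=
      Finset.Nonempty.product ⟨i0, hi0m⟩ (Finset.nonempty_Icc.2 (by omega))
    set K : ℝ := ((Finset.univ \ N.A) ×ˢ Finset.Icc (t1 - (N.T : ℤ)) t1).sup' hDne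
      (fun p => |N.x p.2 p.1 - c|) with hKdef
    have hwinK : ∀ j, j ∉ N.A → ∀ s, t1 - N.T ≤ s → s ≤ t1 → |N.x s j - c| ≤ K := by
      intro j hj s h1 h2
      exact Finset.le_sup' (b := (j, s)) (f := fun p : N.V × ℤ => |N.x p.2 p.1 - c|)
        (Finset.mem_product.2 ⟨Finset.mem_sdiff.2 ⟨Finset.mem_univ _, hj⟩,
          Finset.mem_Icc.2 ⟨h1, h2⟩⟩)
    have hK0 : 0 ≤ K := le_trans (abs_nonneg _) (hwinK i0 hi0 t1 (by omega) le_rfl)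
    have hup := N.converge_upper hfollow ht1 hsend hrob (m := n) le_rfl hK0
      (fun j hj s h1 h2 => by have := abs_le.1 (hwinK j hj s h1 h2); linarith)
    have hfollow' : ∀ i : (N.reflect c).V, i ∉ (N.reflect c).A →
        (N.reflect c).FollowsSWMSR i :=
      fun i hi => N.reflect_follows c (hfollow i hi)
    have hsend' : ∀ t : ℤ, t1 - (N.reflect c).T ≤ t → ∀ j ∈ (N.reflect c).A,
        ∀ i : (N.reflect c).V, j ∈ (N.reflect c).Vnbr t i → (N.reflect c).xr t i j = c := by
      intro t ht j hj i hV
      show 2 * c - N.xr t i j = c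
      rw [hsend t ht j hj i hV]; ring
    have hrob' : (N.reflect c).StronglyRobust (2 * (N.reflect c).F + 1) (N.reflect c).A := hrob
    have ht1' : (N.reflect c).t0 + (N.reflect c).T ≤ t1 := ht1
    have hm' : (Finset.univ \ (N.reflect c).A : Finset (N.reflect c).V).card ≤ n := le_of_eq rfl
    have hwinK' : ∀ j, j ∉ (N.reflect c).A → ∀ s, t1 - (N.reflect c).T ≤ s → s ≤ t1 →
        (N.reflect c).x s j ≤ c + K := by
      intro j hj s h1 h2
      show 2 * c - N.x s j ≤ c + K
      have := abs_le.1 (hwinK j hj s h1 h2); linarith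
    have hlow := (N.reflect c).converge_upper hfollow' ht1' hsend' hrob' hm' hK0 hwinK'
    rw [Metric.tendsto_atTop]
    intro ε hε
    have hgeo : Filter.Tendsto (fun k : ℕ => (1 - q) ^ k * K) Filter.atTop (nhds 0) := by
      have h := tendsto_pow_atTop_nhds_zero_of_lt_one
        (by linarith : (0:ℝ) ≤ 1 - q) (by linarith : 1 - q < 1)
      simpa using h.mul_const K
    obtain ⟨k, hk⟩ := ((tendsto_order.1 hgeo).2 ε hε).exists
    refine ⟨t1 + ((k * (n * (N.T + 1)) : ℕ) : ℤ), fun t ht => ?_⟩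
    have hboundt : ∀ j, j ∉ N.A → |N.x t j - c| ≤ (1 - q) ^ k * K := by
      intro j hj
      have h1 := hup k j hj t (by omega)
      rw [← hq] at h1
      have harg : t1 + ((k * (n * ((N.reflect c).T + 1)) : ℕ) : ℤ) - (N.reflect c).T ≤ t := by
        show t1 + ((k * (n * (N.T + 1)) : ℕ) : ℤ) - (N.T : ℤ) ≤ t
        omega
      have h2 : 2 * c - N.x t j ≤ c + (1 - N.α ^ (n * (N.T + 1))) ^ k * K :=
        hlow k j hj t harg
      rw [← hq] at h2
      rw [abs_le]; constructor <;> linarith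
    have hStne : Set.Nonempty {y : ℝ | ∃ i : N.V, i ∉ N.A ∧ y = |N.x t i - c|} :=
      ⟨|N.x t i0 - c|, i0, hi0, rfl⟩
    have hStb : ∀ y ∈ {y : ℝ | ∃ i : N.V, i ∉ N.A ∧ y = |N.x t i - c|},
        y ≤ (1 - q) ^ k * K := by
      rintro y ⟨j, hj, rfl⟩; exact hboundt j hj
    have hsup_le : sSup {y : ℝ | ∃ i : N.V, i ∉ N.A ∧ y = |N.x t i - c|}
        ≤ (1 - q) ^ k * K := csSup_le hStne hStb
    have hsup_ge : 0 ≤ sSup {y : ℝ | ∃ i : N.V, i ∉ N.A ∧ y = |N.x t i - c|} := by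
      refine le_trans (abs_nonneg (N.x t i0 - c)) ?_
      exact le_csSup ⟨(1 - q) ^ k * K, hStb⟩ ⟨i0, hi0, rfl⟩
    rw [Real.dist_eq, sub_zero, abs_of_nonneg hsup_ge]
    exact lt_of_le_of_lt hsup_le hk
  · push_neg at hA
    have hset : ∀ t : ℤ, {y : ℝ | ∃ i : N.V, i ∉ N.A ∧ y = |N.x t i - c|} = ∅ := by
      intro t
      ext y
      simp only [Set.mem_setOf_eq, Set.mem_empty_iff_false, iff_false]
      rintro ⟨i, hi, _⟩
      exact hi (hA i)
    simp only [hset, Real.sSup_empty]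
    exact tendsto_const_nhds
end

section
/- Let n ≥ 2 and 1 ≤ k < n − 1 be integers, let r ∈ ℕ, and let L be a nonempty subset of the vertices of the k-circulant digraph C_n(1, 2, …, k). If there exists a set P_L of consecutive vertices with |P_L| ≤ k and |P_L ∩ L| ≥ r, then C_n(1, 2, …, k) is strongly r-robust with respect to L. -/
open Finset

/-- for integers `n ≥ 2` and `1 ≤ k < n - 1`, the `k`-circulant digraph
`C_n(1, …, k)` (vertex set `ZMod n`, with the in-neighbors of `i` being
`{i - a : 1 ≤ a ≤ k}`) is strongly `r`-robust with respect to a nonempty set `L` of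
vertices whenever there is a set `PL` of consecutive vertices with `|PL| ≤ k` and
`|PL ∩ L| ≥ r`: every nonempty set `C` of vertices disjoint from `L` contains a vertex
with at least `r` in-neighbors outside `C`. -/
theorem circulant_digraph_strongly_robust (n k : ℕ) (hn : 2 ≤ n) (hk1 : 1 ≤ k)
    (hk2 : k < n - 1) (r : ℕ) (L : Finset (ZMod n)) (hL : L.Nonempty)
    (PL : Finset (ZMod n))
    (hconsec : ∃ (a : ZMod n) (m : ℕ), 1 ≤ m ∧
      PL = (Finset.range m).image fun b : ℕ => a + (b : ZMod n))
    (hPLcard : PL.card ≤ k) (hPLr : r ≤ (PL ∩ L).card) :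
    ∀ C : Finset (ZMod n), C.Nonempty → (∀ v ∈ C, v ∉ L) →
      ∃ i ∈ C, r ≤ (((Finset.Icc 1 k).image fun a : ℕ => i - (a : ZMod n)) \ C).card := by
  intro C hC hCL
  haveI : NeZero n := ⟨by omega⟩
  obtain ⟨a, m, hm1, hPL⟩ := hconsec
  have hkn : k < n := by omega
  -- casts of naturals below n are injective
  have hcast_inj : ∀ x y : ℕ, x < n → y < n → (x : ZMod n) = (y : ZMod n) → x = y := by
    intro x y hx hy h
    have := congrArg ZMod.val h
    rwa [ZMod.val_cast_of_lt hx, ZMod.val_cast_of_lt hy] at this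
  -- m ≤ k
  have hmk : m ≤ k := by
    by_contra hmk
    push_neg at hmk
    have hsub : ((range (k+1)).image fun b : ℕ => a + (b : ZMod n)) ⊆ PL := by
      rw [hPL]
      exact image_subset_image (by intro b hb; simp only [mem_range] at hb ⊢; omega)
    have hcard : ((range (k+1)).image fun b : ℕ => a + (b : ZMod n)).card = k + 1 := by
      rw [card_image_of_injOn, card_range]
      intro x hx y hy hxy
      simp only [coe_range, Set.mem_Iio] at hx hy
      exact hcast_inj x y (by omega) (by omega) (add_left_cancel hxy)
    have := card_le_card hsub
    omega
  -- positions of L inside PL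
  set Lpos : Finset ℕ := (range m).filter (fun p => a + (p : ZMod n) ∈ L) with hLposdef
  have hrL : r ≤ Lpos.card := by
    have hsub : PL ∩ L ⊆ Lpos.image (fun p : ℕ => a + (p : ZMod n)) := by
      intro x hx
      rw [mem_inter] at hx
      obtain ⟨hx1, hx2⟩ := hx
      rw [hPL, mem_image] at hx1
      obtain ⟨b, hb, hbx⟩ := hx1
      exact mem_image.2 ⟨b, mem_filter.2 ⟨hb, by rw [hbx]; exact hx2⟩, hbx⟩
    calc r ≤ (PL ∩ L).card := hPLr
      _ ≤ (Lpos.image (fun p : ℕ => a + (p : ZMod n))).card := card_le_card hsub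
      _ ≤ Lpos.card := card_image_le
  have hLpos_le : Lpos.card ≤ m := le_trans (card_filter_le _ _) (by rw [card_range])
  have hrm : r ≤ m := le_trans hrL hLpos_le
  -- choose t minimal with a + m + t ∈ C
  have hex : ∃ s : ℕ, a + (m : ZMod n) + (s : ZMod n) ∈ C := by
    obtain ⟨c, hc⟩ := hC
    refine ⟨(c - (a + (m : ZMod n))).val, ?_⟩
    rw [ZMod.natCast_val, ZMod.cast_id]
    have : a + (m : ZMod n) + (c - (a + (m : ZMod n))) = c := by ring
    rwa [this]
  set t := Nat.find hex with htdef
  have ht : a + (m : ZMod n) + (t : ZMod n) ∈ C := Nat.find_spec hex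
  have htmin : ∀ s : ℕ, s < t → a + (m : ZMod n) + (s : ZMod n) ∉ C := fun s hs =>
    Nat.find_min hex hs
  set i : ZMod n := a + (m : ZMod n) + (t : ZMod n) with hidef
  refine ⟨i, ht, ?_⟩
  set N : Finset (ZMod n) := (Icc 1 k).image fun j : ℕ => i - (j : ZMod n) with hNdef
  have hNcard : N.card = k := by
    have hinj : Set.InjOn (fun j : ℕ => i - (j : ZMod n)) (Icc 1 k) := by
      intro x hx y hy hxy
      simp only [coe_Icc, Set.mem_Icc] at hx hy
      exact hcast_inj x y (by omega) (by omega) (sub_right_injective hxy)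
    rw [hNdef, card_image_of_injOn hinj, Nat.card_Icc]
    omega
  -- rewriting in-neighbors
  have hgap : ∀ j : ℕ, j ≤ t → i - (j : ZMod n) = a + (m : ZMod n) + ((t - j : ℕ) : ZMod n) := by
    intro j hj
    rw [Nat.cast_sub hj, hidef]
    ring
  have hpl : ∀ j : ℕ, j ≤ m + t → i - (j : ZMod n) = a + ((m + t - j : ℕ) : ZMod n) := by
    intro j hj
    rw [Nat.cast_sub hj, hidef]
    push_cast
    ring
  by_cases hkt : k ≤ t
  · -- all in-neighbors are in the gap, hence outside C
    have hsub : N ⊆ N \ C := by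
      intro x hx
      rw [mem_sdiff]
      refine ⟨hx, ?_⟩
      rw [hNdef, mem_image] at hx
      obtain ⟨j, hj, hjx⟩ := hx
      rw [mem_Icc] at hj
      rw [← hjx, hgap j (le_trans hj.2 hkt)]
      exact htmin _ (by omega)
    have := card_le_card hsub
    omega
  push_neg at hkt
  by_cases hmt : m + t ≤ k
  · -- PL ∩ L is entirely within the in-neighborhood and outside C
    have hsub : PL ∩ L ⊆ N \ C := by
      intro x hx
      rw [mem_inter] at hx
      obtain ⟨hx1, hx2⟩ := hx
      rw [hPL, mem_image] at hx1
      obtain ⟨b, hb, hbx⟩ := hx1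
      rw [mem_range] at hb
      rw [mem_sdiff]
      constructor
      · rw [hNdef, mem_image]
        refine ⟨m + t - b, mem_Icc.2 ⟨by omega, by omega⟩, ?_⟩
        rw [hpl _ (by omega)]
        have : m + t - (m + t - b) = b := by omega
        rw [this, hbx]
      · intro hxC
        exact hCL x hxC hx2
    exact le_trans hPLr (card_le_card hsub)
  push_neg at hmt
  -- main case: t < k < m + t
  set F : Finset ℕ := (Icc (t+1) k).filter (fun j => a + ((m + t - j : ℕ) : ZMod n) ∈ L)
    with hFdef
  set J : Finset ℕ := (Icc (t+1) k).filter (fun j => ¬ (a + ((m + t - j : ℕ) : ZMod n) ∈ L))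
    with hJdef
  have hNC : N ∩ C ⊆ J.image (fun j : ℕ => i - (j : ZMod n)) := by
    intro x hx
    rw [mem_inter] at hx
    obtain ⟨hx1, hx2⟩ := hx
    rw [hNdef, mem_image] at hx1
    obtain ⟨j, hj, hjx⟩ := hx1
    rw [mem_Icc] at hj
    have hjt : t + 1 ≤ j := by
      by_contra hjt
      push_neg at hjt
      have hjle : j ≤ t := by omega
      rw [← hjx, hgap j hjle] at hx2
      exact htmin _ (by omega) hx2
    have hjmt : j ≤ m + t := by omega
    have hnotL : a + ((m + t - j : ℕ) : ZMod n) ∉ L := by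
      intro hLmem
      rw [← hjx, hpl j hjmt] at hx2
      exact hCL _ hx2 hLmem
    exact mem_image.2 ⟨j, mem_filter.2 ⟨mem_Icc.2 ⟨hjt, hj.2⟩, hnotL⟩, hjx⟩
  have hNCcard : (N ∩ C).card ≤ J.card := le_trans (card_le_card hNC) card_image_le
  have hJF : J.card + F.card = k - t := by
    rw [hJdef, hFdef, add_comm]
    rw [Finset.card_filter_add_card_filter_not
      (s := Icc (t+1) k) (p := fun j => a + ((m + t - j : ℕ) : ZMod n) ∈ L), Nat.card_Icc]
    omega
  -- F is large: positions p ≥ m + t - k of Lpos inject into F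
  set d : ℕ := m + t - k with hddef
  have hF : (Lpos.filter (fun p => d ≤ p)).card ≤ F.card := by
    apply card_le_card_of_injOn (fun p => m + t - p)
    · intro p hp
      rw [mem_coe, mem_filter, hLposdef, mem_filter, mem_range] at hp
      obtain ⟨⟨hpm, hpL⟩, hpd⟩ := hp
      rw [hFdef, mem_coe, mem_filter, mem_Icc]
      dsimp only
      refine ⟨⟨by omega, by omega⟩, ?_⟩
      have : m + t - (m + t - p) = p := by omega
      rw [this]
      exact hpL
    · intro p hp q hq hpq
      rw [mem_coe, mem_filter, hLposdef, mem_filter, mem_range] at hp hq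
      dsimp only at hpq
      omega
  have hLsplit : Lpos.card ≤ d + (Lpos.filter (fun p => d ≤ p)).card := by
    have h1 := Finset.card_filter_add_card_filter_not
      (s := Lpos) (p := fun p => d ≤ p)
    have h2 : (Lpos.filter (fun p => ¬ d ≤ p)).card ≤ d := by
      apply le_trans (card_le_card (t := range d) ?_)
      · rw [card_range]
      · intro p hp
        rw [mem_filter] at hp
        rw [mem_range]
        omega
    omega
  have hfinal := Finset.card_inter_add_card_sdiff N C
  clear_value t i N F J Lpos d
  omega
end

section
/- Let n ≥ 2 and 1 ≤ k ≤ ⌈n/2⌉ − 1 be integers, let r ∈ ℕ, and let L be a nonempty subset of the vertices of the undirected k-circulant graph C_n(±1, ±2, …, ±k). If there exists a set P_L of consecutive vertices with |P_L| ≤ k and |P_L ∩ L| ≥ r, then C_n(±1, ±2, …, ±k) is strongly r-robust with respect to L. -/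
open Finset

/-- for integers `n ≥ 2` and `1 ≤ k ≤ ⌈n/2⌉ - 1`, the undirected
`k`-circulant graph `C_n(±1, …, ±k)` (vertex set `ZMod n`, with the neighbors of `i`
being `{i - a : 1 ≤ a ≤ k} ∪ {i + a : 1 ≤ a ≤ k}`) is strongly `r`-robust with respect to
a nonempty set `L` of vertices whenever there is a set `PL` of consecutive vertices with
`|PL| ≤ k` and `|PL ∩ L| ≥ r`: every nonempty set `C` of vertices disjoint from `L`
contains a vertex with at least `r` neighbors outside `C`. -/
theorem circulant_undirected_strongly_robust (n k : ℕ) (hn : 2 ≤ n) (hk1 : 1 ≤ k)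
    (hk2 : k ≤ (n + 1) / 2 - 1) (r : ℕ) (L : Finset (ZMod n)) (hL : L.Nonempty)
    (PL : Finset (ZMod n))
    (hconsec : ∃ (a : ZMod n) (m : ℕ), 1 ≤ m ∧
      PL = (Finset.range m).image fun b : ℕ => a + (b : ZMod n))
    (hPLcard : PL.card ≤ k) (hPLr : r ≤ (PL ∩ L).card) :
    ∀ C : Finset (ZMod n), C.Nonempty → (∀ v ∈ C, v ∉ L) →
      ∃ i ∈ C, r ≤
        ((((Finset.Icc 1 k).image fun a : ℕ => i - (a : ZMod n)) ∪
          ((Finset.Icc 1 k).image fun a : ℕ => i + (a : ZMod n))) \ C).card := by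
  haveI : NeZero n := ⟨by omega⟩
  intro C hC hCL
  obtain ⟨a, m, hm1, hPL⟩ := hconsec
  have hkn : 2 * k + 1 ≤ n := by omega
  -- cast injectivity below n
  have hcast_inj : ∀ s t : ℕ, s < n → t < n → (s : ZMod n) = (t : ZMod n) → s = t := by
    intro s t hs ht h
    have := congrArg ZMod.val h
    rwa [ZMod.val_cast_of_lt hs, ZMod.val_cast_of_lt ht] at this
  have hmn : m < n := by
    by_contra h
    push_neg at h
    have huniv : (Finset.univ : Finset (ZMod n)) ⊆ PL := by
      intro v _
      rw [hPL]
      refine Finset.mem_image.mpr ⟨(v - a).val, Finset.mem_range.mpr ?_, ?_⟩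
      · exact lt_of_lt_of_le (ZMod.val_lt _) h
      · rw [ZMod.natCast_rightInverse (v - a)]; ring
    have := Finset.card_le_card huniv
    rw [Finset.card_univ, ZMod.card] at this
    omega
  have hcardPL : PL.card = m := by
    rw [hPL, Finset.card_image_of_injOn, Finset.card_range]
    intro b₁ h₁ b₂ h₂ he
    simp only [Finset.coe_range, Set.mem_Iio] at h₁ h₂
    exact hcast_inj _ _ (by omega) (by omega) (by exact add_left_cancel he)
  have hmk : m ≤ k := hcardPL ▸ hPLcard
  have hrk : r ≤ k := le_trans hPLr (le_trans (Finset.card_le_card Finset.inter_subset_left) hPLcard)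
  have hmemPL : ∀ s : ℕ, s < m → a + (s : ZMod n) ∈ PL := by
    intro s hs
    rw [hPL]
    exact Finset.mem_image.mpr ⟨s, Finset.mem_range.mpr hs, rfl⟩
  have hmemPL' : ∀ x ∈ PL, ∃ s : ℕ, s < m ∧ x = a + (s : ZMod n) := by
    intro x hx
    rw [hPL] at hx
    obtain ⟨s, hs, rfl⟩ := Finset.mem_image.mp hx
    exact ⟨s, Finset.mem_range.mp hs, rfl⟩
  have hex : ∀ c : ZMod n, ∃ t : ℕ, c + (t : ZMod n) ∈ PL := by
    intro c
    refine ⟨(a - c).val, ?_⟩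
    rw [ZMod.natCast_rightInverse (a - c)]
    have : c + (a - c) = a + ((0 : ℕ) : ZMod n) := by push_cast; ring
    rw [this]
    exact hmemPL 0 hm1
  obtain ⟨i, hiC, hmin⟩ := C.exists_min_image (fun c => Nat.find (hex c)) hC
  refine ⟨i, hiC, ?_⟩
  set d := Nat.find (hex i) with hd
  have hspec : i + (d : ZMod n) ∈ PL := Nat.find_spec (hex i)
  by_cases hd0 : d = 0
  · -- i ∈ PL
    rw [hd0] at hspec
    simp only [Nat.cast_zero, add_zero] at hspec
    obtain ⟨t, htm, hit⟩ := hmemPL' i hspec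
    refine le_trans hPLr (Finset.card_le_card ?_)
    intro j hj
    obtain ⟨hjPL, hjL⟩ := Finset.mem_inter.mp hj
    have hjC : j ∉ C := fun h => hCL j h hjL
    obtain ⟨s, hsm, hjs⟩ := hmemPL' j hjPL
    have hst : s ≠ t := by
      intro h
      have hji : j = i := by rw [hit, hjs, h]
      exact hCL i hiC (hji ▸ hjL)
    rw [Finset.mem_sdiff]
    refine ⟨Finset.mem_union.mpr ?_, hjC⟩
    rcases lt_or_gt_of_ne hst with h | h
    · -- s < t : j = i - (t - s)
      left
      refine Finset.mem_image.mpr ⟨t - s, Finset.mem_Icc.mpr ⟨by omega, by omega⟩, ?_⟩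
      rw [hit, hjs, Nat.cast_sub h.le]; ring
    · -- t < s : j = i + (s - t)
      right
      refine Finset.mem_image.mpr ⟨s - t, Finset.mem_Icc.mpr ⟨by omega, by omega⟩, ?_⟩
      rw [hit, hjs, Nat.cast_sub h.le]; ring
  · have hd1 : 1 ≤ d := by omega
    -- i + d = a
    obtain ⟨s, hsm, hds⟩ := hmemPL' _ hspec
    have hs0 : s = 0 := by
      by_contra h
      have hmem : i + ((d - 1 : ℕ) : ZMod n) ∈ PL := by
        have : i + ((d - 1 : ℕ) : ZMod n) = a + ((s - 1 : ℕ) : ZMod n) := by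
          rw [Nat.cast_sub hd1, Nat.cast_sub (by omega : 1 ≤ s)]
          have := hds
          push_cast
          linear_combination this
        rw [this]
        exact hmemPL _ (by omega)
      exact Nat.find_min (hex i) (by omega) hmem
    rw [hs0] at hds
    simp only [Nat.cast_zero, add_zero] at hds
    -- hds : i + d = a
    by_cases hcase : k < d + m
    · -- all forward neighbors outside C
      refine le_trans hrk ?_
      have himg : (Finset.Icc 1 k).image (fun j : ℕ => i + (j : ZMod n)) ⊆
          ((((Finset.Icc 1 k).image fun a : ℕ => i - (a : ZMod n)) ∪
            ((Finset.Icc 1 k).image fun a : ℕ => i + (a : ZMod n))) \ C) := by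
        intro x hx
        obtain ⟨j, hj, rfl⟩ := Finset.mem_image.mp hx
        obtain ⟨hj1, hjk⟩ := Finset.mem_Icc.mp hj
        rw [Finset.mem_sdiff]
        constructor
        · exact Finset.mem_union_right _ (Finset.mem_image.mpr ⟨j, hj, rfl⟩)
        · intro hxC
          have hmi := hmin _ hxC
          rcases le_or_gt j d with hjd | hjd
          · -- find (hex (i+j)) ≤ d - j
            have : i + (j : ZMod n) + ((d - j : ℕ) : ZMod n) ∈ PL := by
              have heq : i + (j : ZMod n) + ((d - j : ℕ) : ZMod n) = a + ((0:ℕ) : ZMod n) := by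
                rw [Nat.cast_sub hjd]
                push_cast
                linear_combination hds
              rw [heq]; exact hmemPL 0 hm1
            have : Nat.find (hex (i + (j : ZMod n))) ≤ d - j := Nat.find_le this
            omega
          · -- i + j ∈ PL
            have : i + (j : ZMod n) + ((0:ℕ) : ZMod n) ∈ PL := by
              have heq : i + (j : ZMod n) + ((0:ℕ) : ZMod n) = a + ((j - d : ℕ) : ZMod n) := by
                rw [Nat.cast_sub hjd.le]
                push_cast
                linear_combination hds
              rw [heq]; exact hmemPL _ (by omega)
            have : Nat.find (hex (i + (j : ZMod n))) ≤ 0 := Nat.find_le this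
            omega
      calc k = ((Finset.Icc 1 k).image (fun j : ℕ => i + (j : ZMod n))).card := by
              rw [Finset.card_image_of_injOn, Nat.card_Icc]
              · omega
              · intro b₁ h₁ b₂ h₂ he
                simp only [Finset.coe_Icc, Set.mem_Icc] at h₁ h₂
                exact hcast_inj _ _ (by omega) (by omega) (add_left_cancel he)
           _ ≤ _ := Finset.card_le_card himg
    · -- PL ∩ L ⊆ forward neighbors
      refine le_trans hPLr (Finset.card_le_card ?_)
      intro j hj
      obtain ⟨hjPL, hjL⟩ := Finset.mem_inter.mp hj
      have hjC : j ∉ C := fun h => hCL j h hjL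
      obtain ⟨s, hsm, hjs⟩ := hmemPL' j hjPL
      rw [Finset.mem_sdiff]
      refine ⟨Finset.mem_union_right _ ?_, hjC⟩
      refine Finset.mem_image.mpr ⟨d + s, Finset.mem_Icc.mpr ⟨by omega, by omega⟩, ?_⟩
      rw [hjs]
      push_cast
      linear_combination hds
end

section
/- Let I be a nonempty finite set, F ∈ ℕ, v : I → ℝ, A ⊆ I with |A| ≤ F, and i ∈ I \ A. Let G = {j ∈ I : v(j) > v(i)} and H = {j ∈ I : v(j) < v(i)}. Suppose R_hi ⊆ G satisfies: R_hi = G if |G| ≤ F, and otherwise |R_hi| = F and v(j) ≥ v(k) for all j ∈ R_hi and all k ∈ G \ R_hi; and suppose R_lo ⊆ H satisfies the analogous condition with the inequalities reversed. Then for every j ∈ I \ (R_hi ∪ R_lo), one has min_{k ∈ I \ A} v(k) ≤ v(j) ≤ max_{k ∈ I \ A} v(k). In other words, every value surviving the MSR filtering lies between the minimum and maximum of the values held by non-adversarial indices. -/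
open Finset

/-- MSR filtering property. Let `I` be a nonempty finite set, `v : I → ℝ`,
`A ⊆ I` with `|A| ≤ F`, and `i ∈ I \ A`. With `G = {j ∈ I : v j > v i}` and
`H = {j ∈ I : v j < v i}`, suppose `Rhi ⊆ G` equals `G` if `|G| ≤ F` and otherwise has
`|Rhi| = F` with every element of `Rhi` carrying a value at least that of every element
of `G \ Rhi` (analogously for `Rlo ⊆ H` with inequalities reversed). Then every value
surviving the filtering lies between the minimum and maximum of the values held by
non-adversarial indices. -/
theorem msr_filter_bounds {α : Type*} [DecidableEq α]
    (I : Finset α) (F : ℕ) (v : α → ℝ) (A : Finset α) (hAI : A ⊆ I) (hA : A.card ≤ F)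
    (i : α) (hiI : i ∈ I) (hiA : i ∉ A)
    (Rhi Rlo : Finset α)
    (hRhiSub : Rhi ⊆ I.filter fun j => v i < v j)
    (hRhi : if (I.filter fun j => v i < v j).card ≤ F
        then Rhi = I.filter fun j => v i < v j
        else Rhi.card = F ∧
          ∀ j ∈ Rhi, ∀ k ∈ (I.filter fun j => v i < v j) \ Rhi, v k ≤ v j)
    (hRloSub : Rlo ⊆ I.filter fun j => v j < v i)
    (hRlo : if (I.filter fun j => v j < v i).card ≤ F
        then Rlo = I.filter fun j => v j < v i
        else Rlo.card = F ∧
          ∀ j ∈ Rlo, ∀ k ∈ (I.filter fun j => v j < v i) \ Rlo, v j ≤ v k) :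
    ∀ j ∈ I \ (Rhi ∪ Rlo),
      (I \ A).inf' ⟨i, Finset.mem_sdiff.mpr ⟨hiI, hiA⟩⟩ v ≤ v j ∧
      v j ≤ (I \ A).sup' ⟨i, Finset.mem_sdiff.mpr ⟨hiI, hiA⟩⟩ v := by
  intro j hj
  rw [Finset.mem_sdiff, Finset.mem_union, not_or] at hj
  obtain ⟨hjI, hjRhi, hjRlo⟩ := hj
  have hiIA : i ∈ I \ A := Finset.mem_sdiff.mpr ⟨hiI, hiA⟩
  by_cases hjA : j ∈ A
  · constructor
    · rcases le_or_gt (v i) (v j) with h | h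
      · exact le_trans (Finset.inf'_le v hiIA) h
      · have hjH : j ∈ I.filter fun k => v k < v i := Finset.mem_filter.mpr ⟨hjI, h⟩
        split_ifs at hRlo with hc
        · exact absurd (hRlo ▸ hjH) hjRlo
        · obtain ⟨hcard, hle⟩ := hRlo
          have hns : ¬ Rlo ⊆ A := by
            intro hsub
            have h1 : insert j Rlo ⊆ A := Finset.insert_subset hjA hsub
            have h2 := Finset.card_le_card h1
            rw [Finset.card_insert_of_notMem hjRlo, hcard] at h2
            omega
          obtain ⟨k, hkRlo, hkA⟩ := Finset.not_subset.mp hns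
          have hkI : k ∈ I := Finset.filter_subset _ _ (hRloSub hkRlo)
          calc (I \ A).inf' _ v ≤ v k := Finset.inf'_le v (Finset.mem_sdiff.mpr ⟨hkI, hkA⟩)
            _ ≤ v j := hle k hkRlo j (Finset.mem_sdiff.mpr ⟨hjH, hjRlo⟩)
    · rcases le_or_gt (v j) (v i) with h | h
      · exact le_trans h (Finset.le_sup' v hiIA)
      · have hjG : j ∈ I.filter fun k => v i < v k := Finset.mem_filter.mpr ⟨hjI, h⟩
        split_ifs at hRhi with hc
        · exact absurd (hRhi ▸ hjG) hjRhi
        · obtain ⟨hcard, hle⟩ := hRhi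
          have hns : ¬ Rhi ⊆ A := by
            intro hsub
            have h1 : insert j Rhi ⊆ A := Finset.insert_subset hjA hsub
            have h2 := Finset.card_le_card h1
            rw [Finset.card_insert_of_notMem hjRhi, hcard] at h2
            omega
          obtain ⟨k, hkRhi, hkA⟩ := Finset.not_subset.mp hns
          have hkI : k ∈ I := Finset.filter_subset _ _ (hRhiSub hkRhi)
          calc v j ≤ v k := hle k hkRhi j (Finset.mem_sdiff.mpr ⟨hjG, hjRhi⟩)
            _ ≤ (I \ A).sup' _ v := Finset.le_sup' v (Finset.mem_sdiff.mpr ⟨hkI, hkA⟩)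
  · exact ⟨Finset.inf'_le v (Finset.mem_sdiff.mpr ⟨hjI, hjA⟩),
      Finset.le_sup' v (Finset.mem_sdiff.mpr ⟨hjI, hjA⟩)⟩
end
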